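/- If G is a gap-free simple graph on n vertices with no isolated vertices, then τ_max(G) ≥ 2√n − 2. -/

import Mathlib

/-- `W` is a vertex cover of `G`: it meets every edge. -/
def IsVC {V : Type*} (G : SimpleGraph V) (W : Finset V) : Prop :=
  ∀ ⦃u v : V⦄, G.Adj u v → u ∈ W ∨ v ∈ W

/-- `W` is a minimal vertex cover of `G`. -/
def IsMinVC {V : Type*} (G : SimpleGraph V) (W : Finset V) : Prop :=
  IsVC G W ∧ ∀ W' : Finset V, W' ⊂ W → ¬ IsVC G W'

/-- The maximum size of a minimal vertex cover of `G`. -/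
noncomputable def tauMax {V : Type*} (G : SimpleGraph V) : ℕ :=
  sSup {k : ℕ | ∃ W : Finset V, IsMinVC G W ∧ W.card = k}
/-- `G` is gap-free: any two disjoint edges are joined by a third edge meeting both. -/
def GapFree {V : Type*} (G : SimpleGraph V) : Prop :=
  ∀ ⦃a b c d : V⦄, G.Adj a b → G.Adj c d →
    ({a, b} : Set V) ∩ {c, d} = ∅ →
    ∃ u v : V, G.Adj u v ∧ (u ∈ ({a, b} : Set V) ∨ v ∈ ({a, b} : Set V)) ∧
      (u ∈ ({c, d} : Set V) ∨ v ∈ ({c, d} : Set V))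

open Finset

/-- `c*e ≤ (c+e)^2/4` in ℕ. -/
lemma quarter_bound (c e : ℕ) : c * e ≤ (c + e)^2 / 4 := by
  rw [Nat.le_div_iff_mul_le (by norm_num)]
  nlinarith [sq_nonneg (c - e : ℤ)]

lemma sq_div_four_odd (x : ℕ) : (2*x+1)^2 / 4 = x*x + x := by
  have h : (2*x+1)^2 = 4*(x*x+x) + 1 := by ring
  omega

lemma sq_div_four_even (x : ℕ) : (2*x)^2 / 4 = x*x := by
  have h : (2*x)^2 = 4*(x*x) := by ring
  omega

/-- merge inequality -/
lemma merge_quarter {a b : ℕ} (ha : 1 ≤ a) (hb : 1 ≤ b) :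
    a^2/4 + b^2/4 + 1 ≤ (a+b)^2/4 := by
  rcases Nat.even_or_odd a with ⟨x, hx⟩ | ⟨x, hx⟩ <;>
    rcases Nat.even_or_odd b with ⟨y, hy⟩ | ⟨y, hy⟩ <;> subst hx <;> subst hy
  · have ea : (x+x)^2 = 4*(x*x) := by ring
    have eb : (y+y)^2 = 4*(y*y) := by ring
    have es : ((x+x)+(y+y))^2 = 4*(x*x + 2*(x*y) + y*y) := by ring
    have hx1 : 1 ≤ x := by omega
    have hy1 : 1 ≤ y := by omega
    have hxy : 1 ≤ x*y := Nat.mul_pos hx1 hy1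
    omega
  · have ea : (x+x)^2 = 4*(x*x) := by ring
    have eb : (2*y+1)^2 = 4*(y*y+y)+1 := by ring
    have es : ((x+x)+(2*y+1))^2 = 4*(x*x + 2*(x*y) + y*y + x + y) + 1 := by ring
    omega
  · have ea : (2*x+1)^2 = 4*(x*x+x)+1 := by ring
    have eb : (y+y)^2 = 4*(y*y) := by ring
    have es : ((2*x+1)+(y+y))^2 = 4*(x*x + 2*(x*y) + y*y + x + y) + 1 := by ring
    omega
  · have ea : (2*x+1)^2 = 4*(x*x+x)+1 := by ring
    have eb : (2*y+1)^2 = 4*(y*y+y)+1 := by ring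
    have es : ((2*x+1)+(2*y+1))^2 = 4*(x*x + 2*(x*y) + y*y + 2*x + 2*y + 1) := by ring
    omega

/-- Union bound for a "connected" family of finsets. -/
lemma chain_union_bound {α : Type*} [DecidableEq α] (F : Finset (Finset α)) (hne : F.Nonempty)
    (hcon : ∀ A ⊆ F, A.Nonempty → A ≠ F →
      ∃ t ∈ F, t ∉ A ∧ ∃ t' ∈ A, (t ∩ t').Nonempty) :
    (F.sup id).card + F.card ≤ (∑ t ∈ F, t.card) + 1 := by
  classical
  have aux : ∀ (j : ℕ) (A : Finset (Finset α)), A ⊆ F → A.Nonempty →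
      (A.sup id).card + A.card ≤ (∑ t ∈ A, t.card) + 1 → F.card ≤ A.card + j →
      (F.sup id).card + F.card ≤ (∑ t ∈ F, t.card) + 1 := by
    intro j
    induction j with
    | zero =>
      intro A hAF hAne hQ hcard
      have : A = F := Finset.eq_of_subset_of_card_le hAF (by omega)
      subst this; exact hQ
    | succ j ih =>
      intro A hAF hAne hQ hcard
      by_cases hAF' : A = F
      · subst hAF'; exact hQ
      · obtain ⟨t, htF, htA, t', ht'A, hint⟩ := hcon A hAF hAne hAF'
        have hY : t' ⊆ A.sup id := Finset.le_sup (f := id) ht'A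
        have hintY : 1 ≤ (t ∩ A.sup id).card := by
          obtain ⟨x, hx⟩ := hint
          simp only [Finset.mem_inter] at hx
          exact Finset.card_pos.mpr ⟨x, Finset.mem_inter.mpr ⟨hx.1, hY hx.2⟩⟩
        have hsup : (insert t A).sup id = t ∪ A.sup id := by
          rw [Finset.sup_insert]; rfl
        have hcards := Finset.card_union_add_card_inter t (A.sup id)
        apply ih (insert t A) (Finset.insert_subset htF hAF) ⟨t, Finset.mem_insert_self _ _⟩
        · rw [hsup, Finset.sum_insert htA, Finset.card_insert_of_notMem htA]
          omega
        · rw [Finset.card_insert_of_notMem htA]; omega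
  obtain ⟨t₀, ht₀⟩ := hne
  apply aux F.card {t₀} (Finset.singleton_subset_iff.mpr ht₀) ⟨t₀, Finset.mem_singleton_self _⟩
  · simp
  · simp only [Finset.card_singleton]; omega
/-- Master combinatorial lemma: if every trace `f w` is nonempty and
`|f a| ≤ #{w ∈ W : f w ⊆ f a}` for all `a ∈ W`, then `|⋃ f| ≤ |W|²/4 + 1`. -/
lemma master_bound {ι α : Type*} [DecidableEq ι] [DecidableEq α] :
    ∀ (N : ℕ) (W : Finset ι) (f : ι → Finset α), W.card ≤ N →
    (∀ w ∈ W, (f w).Nonempty) →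
    (∀ a ∈ W, (f a).card ≤ (W.filter (fun w => f w ⊆ f a)).card) →
    (W.biUnion f).card ≤ W.card^2/4 + 1 := by
  intro N
  induction N with
  | zero =>
    intro W f hN _ _
    have hWe : W = ∅ := Finset.card_eq_zero.mp (by omega)
    subst hWe; simp
  | succ N ih =>
    intro W f hN hne htrace
    rcases W.eq_empty_or_nonempty with rfl | hWne
    · simp
    classical
    obtain ⟨a, haW, hamax⟩ := Finset.exists_max_image W (fun w => (f w).card) hWne
    obtain ⟨s₀, hs₀fa⟩ := hne a haW
    set S := W.biUnion f with hSdef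
    set step : α → α → Prop := fun x y => ∃ w ∈ W, x ∈ f w ∧ y ∈ f w with hstepdef
    set X : Finset α := S.filter (fun s => Relation.ReflTransGen step s₀ s) with hXdef
    set W₁ : Finset ι := W.filter (fun w => (f w ∩ X).Nonempty) with hW₁def
    set W₂ : Finset ι := W.filter (fun w => ¬ (f w ∩ X).Nonempty) with hW₂def
    have hs₀S : s₀ ∈ S := Finset.mem_biUnion.mpr ⟨a, haW, hs₀fa⟩
    have hs₀X : s₀ ∈ X := Finset.mem_filter.mpr ⟨hs₀S, Relation.ReflTransGen.refl⟩
    have hK1 : ∀ w ∈ W₁, f w ⊆ X := by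
      intro w hw s' hs'
      obtain ⟨hwW, s, hs⟩ := Finset.mem_filter.mp hw
      obtain ⟨hsf, hsX⟩ := Finset.mem_inter.mp hs
      obtain ⟨hsS, hreach⟩ := Finset.mem_filter.mp hsX
      exact Finset.mem_filter.mpr ⟨Finset.mem_biUnion.mpr ⟨w, hwW, hs'⟩,
        hreach.tail ⟨w, hwW, hsf, hs'⟩⟩
    have haW₁ : a ∈ W₁ :=
      Finset.mem_filter.mpr ⟨haW, ⟨s₀, Finset.mem_inter.mpr ⟨hs₀fa, hs₀X⟩⟩⟩
    -- maximal traces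
    set T : Finset (Finset α) := W₁.image f with hTdef
    set Tmax : Finset (Finset α) := T.filter (fun t => ∀ t' ∈ T, t ⊆ t' → t = t') with hTmaxdef
    have hfaT : f a ∈ T := Finset.mem_image_of_mem f haW₁
    have hfaTmax : f a ∈ Tmax := by
      refine Finset.mem_filter.mpr ⟨hfaT, ?_⟩
      intro t' ht' hsub
      obtain ⟨w', hw', rfl⟩ := Finset.mem_image.mp ht'
      exact Finset.eq_of_subset_of_card_le hsub (hamax w' (Finset.filter_subset _ _ hw'))
    have hcover : ∀ t ∈ T, ∃ t' ∈ Tmax, t ⊆ t' := by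
      intro t ht
      obtain ⟨t', ht'mem, ht'max⟩ := Finset.exists_max_image (T.filter (fun u => t ⊆ u))
        (fun u => u.card) ⟨t, Finset.mem_filter.mpr ⟨ht, Finset.Subset.refl t⟩⟩
      obtain ⟨ht'T, htt'⟩ := Finset.mem_filter.mp ht'mem
      refine ⟨t', Finset.mem_filter.mpr ⟨ht'T, ?_⟩, htt'⟩
      intro t'' ht'' hsub
      exact Finset.eq_of_subset_of_card_le hsub
        (ht'max t'' (Finset.mem_filter.mpr ⟨ht'', htt'.trans hsub⟩))
    have hTmaxX : ∀ t ∈ Tmax, t ⊆ X := by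
      intro t ht
      obtain ⟨w', hw', rfl⟩ := Finset.mem_image.mp (Finset.mem_filter.mp ht).1
      exact hK1 w' hw'
    have hTmaxNe : ∀ t ∈ Tmax, t.Nonempty := by
      intro t ht
      obtain ⟨w', hw', rfl⟩ := Finset.mem_image.mp (Finset.mem_filter.mp ht).1
      exact hne w' (Finset.filter_subset _ _ hw')
    have hXcov : X ⊆ Tmax.sup id := by
      intro s hsX
      have hsS : s ∈ S := Finset.filter_subset _ _ hsX
      obtain ⟨w, hwW, hsf⟩ := Finset.mem_biUnion.mp hsS
      have hwW₁ : w ∈ W₁ :=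
        Finset.mem_filter.mpr ⟨hwW, ⟨s, Finset.mem_inter.mpr ⟨hsf, hsX⟩⟩⟩
      obtain ⟨t', ht', hsub⟩ := hcover (f w) (Finset.mem_image_of_mem f hwW₁)
      exact Finset.mem_sup.mpr ⟨t', ht', hsub hsf⟩
    -- connectivity of maximal traces
    have hconn : ∀ A ⊆ Tmax, A.Nonempty → A ≠ Tmax →
        ∃ t ∈ Tmax, t ∉ A ∧ ∃ t' ∈ A, (t ∩ t').Nonempty := by
      intro A hA hAne hAneq
      by_contra hcontra
      have hcross : ∀ t ∈ Tmax, t ∉ A → ∀ t' ∈ A, ∀ s, s ∈ t → s ∈ t' → False := by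
        intro t ht htA t' ht' s hs hs'
        exact hcontra ⟨t, ht, htA, t', ht', ⟨s, Finset.mem_inter.mpr ⟨hs, hs'⟩⟩⟩
      set YA := A.sup id with hYA
      set YB := (Tmax \ A).sup id with hYB
      have hdisj : ∀ s, s ∈ YA → s ∈ YB → False := by
        intro s hsA hsB
        obtain ⟨tA, htA, hstA⟩ := Finset.mem_sup.mp hsA
        obtain ⟨tB, htB, hstB⟩ := Finset.mem_sup.mp hsB
        obtain ⟨htBmax, htBA⟩ := Finset.mem_sdiff.mp htB
        exact hcross tB htBmax htBA tA htA s hstB hstA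
      have hsideA : ∀ t ∈ Tmax, ∀ s, s ∈ t → s ∈ YA → t ⊆ YA := by
        intro t ht s hs hsYA
        have htA : t ∈ A := by
          by_contra htA
          obtain ⟨tA, htA', hstA⟩ := Finset.mem_sup.mp hsYA
          exact hcross t ht htA tA htA' s hs hstA
        exact Finset.le_sup (f := id) htA
      have hsideB : ∀ t ∈ Tmax, ∀ s, s ∈ t → s ∈ YB → t ⊆ YB := by
        intro t ht s hs hsYB
        have htB : t ∈ Tmax \ A := by
          refine Finset.mem_sdiff.mpr ⟨ht, ?_⟩
          intro htA
          obtain ⟨tB, htB', hstB⟩ := Finset.mem_sup.mp hsYB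
          obtain ⟨htBmax, htBA⟩ := Finset.mem_sdiff.mp htB'
          exact hcross tB htBmax htBA t htA s hstB hs
        exact Finset.le_sup (f := id) htB
      have hstepcl : ∀ (Y : Finset α), (∀ t ∈ Tmax, ∀ s, s ∈ t → s ∈ Y → t ⊆ Y) →
          ∀ x y, x ∈ X → step x y → x ∈ Y → y ∈ Y := by
        intro Y hside x y hxX hst hxY
        obtain ⟨w, hwW, hxf, hyf⟩ := hst
        have hwW₁ : w ∈ W₁ :=
          Finset.mem_filter.mpr ⟨hwW, ⟨x, Finset.mem_inter.mpr ⟨hxf, hxX⟩⟩⟩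
        obtain ⟨t'', ht'', hsub⟩ := hcover (f w) (Finset.mem_image_of_mem f hwW₁)
        exact hside t'' ht'' x (hsub hxf) hxY (hsub hyf)
      have hreach : ∀ (Y : Finset α), (∀ t ∈ Tmax, ∀ s, s ∈ t → s ∈ Y → t ⊆ Y) →
          ∀ s, Relation.ReflTransGen step s₀ s → s₀ ∈ Y → s ∈ Y := by
        intro Y hside s h
        induction h with
        | refl => exact id
        | @tail b c h1 h2 IH =>
          intro h0
          have hbX : b ∈ X := by
            refine Finset.mem_filter.mpr ⟨?_, h1⟩
            obtain ⟨w, hwW, hbf, _⟩ := h2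
            exact Finset.mem_biUnion.mpr ⟨w, hwW, hbf⟩
          exact hstepcl Y hside b c hbX h2 (IH h0)
      have hmemX_reach : ∀ s ∈ X, Relation.ReflTransGen step s₀ s := by
        intro s hs; exact (Finset.mem_filter.mp hs).2
      by_cases hfaA : f a ∈ A
      · have hs₀YA : s₀ ∈ YA := Finset.mem_sup.mpr ⟨f a, hfaA, hs₀fa⟩
        have hss : A ⊂ Tmax := Finset.ssubset_iff_subset_ne.mpr ⟨hA, hAneq⟩
        obtain ⟨t, htTmax, htA⟩ := Finset.exists_of_ssubset hss
        obtain ⟨s', hs'⟩ := hTmaxNe t htTmax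
        have hs'YB : s' ∈ YB :=
          Finset.mem_sup.mpr ⟨t, Finset.mem_sdiff.mpr ⟨htTmax, htA⟩, hs'⟩
        have hs'X : s' ∈ X := hTmaxX t htTmax hs'
        have hs'YA : s' ∈ YA := hreach YA hsideA s' (hmemX_reach s' hs'X) hs₀YA
        exact hdisj s' hs'YA hs'YB
      · have hs₀YB : s₀ ∈ YB :=
          Finset.mem_sup.mpr ⟨f a, Finset.mem_sdiff.mpr ⟨hfaTmax, hfaA⟩, hs₀fa⟩
        obtain ⟨t', ht'A⟩ := hAne
        obtain ⟨s', hs'⟩ := hTmaxNe t' (hA ht'A)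
        have hs'YA : s' ∈ YA := Finset.mem_sup.mpr ⟨t', ht'A, hs'⟩
        have hs'X : s' ∈ X := hTmaxX t' (hA ht'A) hs'
        have hs'YB : s' ∈ YB := hreach YB hsideB s' (hmemX_reach s' hs'X) hs₀YB
        exact hdisj s' hs'YA hs'YB
    -- per-trace cardinality bound
    have hc1 : 1 ≤ Tmax.card := Finset.card_pos.mpr ⟨f a, hfaTmax⟩
    have hcw : Tmax.card ≤ W₁.card :=
      le_trans (Finset.card_le_card (Finset.filter_subset _ _)) Finset.card_image_le
    have hper : ∀ t ∈ Tmax, t.card + Tmax.card ≤ W₁.card + 1 := by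
      intro t ht
      obtain ⟨w, hwW₁, hfw⟩ := Finset.mem_image.mp (Finset.mem_filter.mp ht).1
      set D := W.filter (fun w' => f w' ⊆ f w) with hDdef
      have hDsub : D ⊆ W₁ := by
        intro w' hw'
        obtain ⟨hw'W, hsub⟩ := Finset.mem_filter.mp hw'
        obtain ⟨s, hs⟩ := hne w' hw'W
        exact Finset.mem_filter.mpr
          ⟨hw'W, ⟨s, Finset.mem_inter.mpr ⟨hs, hK1 w hwW₁ (hsub hs)⟩⟩⟩
      have hiii := htrace w (Finset.filter_subset _ _ hwW₁)
      have hinj : (Tmax.erase t).card ≤ (W₁ \ D).card := by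
        set g : Finset α → ι := fun t' => if h : ∃ w' ∈ W₁, f w' = t' then h.choose else w
          with hgdef
        have hgspec : ∀ t' ∈ Tmax.erase t, g t' ∈ W₁ ∧ f (g t') = t' := by
          intro t' ht'
          have ht'T : t' ∈ T := (Finset.mem_filter.mp (Finset.mem_of_mem_erase ht')).1
          have hex : ∃ w' ∈ W₁, f w' = t' := Finset.mem_image.mp ht'T
          rw [hgdef]; simp only [dif_pos hex]
          exact ⟨hex.choose_spec.1, hex.choose_spec.2⟩
        apply Finset.card_le_card_of_injOn g
        · intro t' ht'
          obtain ⟨hgW₁, hgf⟩ := hgspec t' ht'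
          refine Finset.mem_sdiff.mpr ⟨hgW₁, ?_⟩
          intro hgD
          have hsub : f (g t') ⊆ f w := (Finset.mem_filter.mp hgD).2
          rw [hgf] at hsub
          have ht'max := (Finset.mem_filter.mp (Finset.mem_of_mem_erase ht')).2
          have heqt : t' = f w := ht'max (f w) (Finset.mem_image_of_mem f hwW₁) hsub
          rw [hfw] at heqt
          exact (Finset.ne_of_mem_erase ht') heqt
        · intro t₁ h₁ t₂ h₂ hg
          have e₁ := (hgspec t₁ h₁).2
          have e₂ := (hgspec t₂ h₂).2
          rw [← e₁, ← e₂, hg]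
      have hDcard : D.card ≤ W₁.card := Finset.card_le_card hDsub
      have hsd : (W₁ \ D).card = W₁.card - D.card := Finset.card_sdiff_of_subset hDsub
      have herase : (Tmax.erase t).card = Tmax.card - 1 := Finset.card_erase_of_mem ht
      have htcard : t.card ≤ D.card := by rw [← hfw]; exact hiii
      omega
    have hsum : ∑ t ∈ Tmax, t.card ≤ Tmax.card * (W₁.card + 1 - Tmax.card) := by
      calc ∑ t ∈ Tmax, t.card ≤ Tmax.card • (W₁.card + 1 - Tmax.card) :=
            Finset.sum_le_card_nsmul _ _ _ (fun t ht => by have := hper t ht; omega)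
        _ = Tmax.card * (W₁.card + 1 - Tmax.card) := by
            rw [smul_eq_mul]
    have hchain := chain_union_bound Tmax ⟨f a, hfaTmax⟩ hconn
    have hXbound : X.card ≤ W₁.card^2/4 + 1 := by
      have h1 : X.card ≤ (Tmax.sup id).card := Finset.card_le_card hXcov
      have he : W₁.card = Tmax.card + (W₁.card - Tmax.card) := by omega
      have hq := quarter_bound Tmax.card (W₁.card - Tmax.card)
      have h2 : Tmax.card * (W₁.card + 1 - Tmax.card)
          = Tmax.card * (W₁.card - Tmax.card) + Tmax.card := by
        rw [show W₁.card + 1 - Tmax.card = (W₁.card - Tmax.card) + 1 from by omega]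
        ring
      rw [show W₁.card^2 = (Tmax.card + (W₁.card - Tmax.card))^2 from by rw [← he]]
      linarith [h1, hchain, hsum, hq, h2.le, h2.ge]
    have hcards : W₁.card + W₂.card = W.card := by
      rw [hW₁def, hW₂def]
      exact Finset.card_filter_add_card_filter_not _
    rcases W₂.eq_empty_or_nonempty with hW₂e | hW₂ne
    · have hSX : S ⊆ X := by
        intro s hs
        obtain ⟨w, hwW, hsf⟩ := Finset.mem_biUnion.mp hs
        have hwW₁ : w ∈ W₁ := by
          by_contra hw1
          have hw2 : w ∈ W₂ := by
            refine Finset.mem_filter.mpr ⟨hwW, ?_⟩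
            intro hne'
            exact hw1 (Finset.mem_filter.mpr ⟨hwW, hne'⟩)
          rw [hW₂e] at hw2; exact absurd hw2 (Finset.notMem_empty w)
        exact hK1 w hwW₁ hsf
      have hW1W : W₁.card = W.card := by
        have := Finset.card_eq_zero.mpr hW₂e
        omega
      calc S.card ≤ X.card := Finset.card_le_card hSX
        _ ≤ W₁.card^2/4 + 1 := hXbound
        _ = W.card^2/4 + 1 := by rw [hW1W]
    · have haW₂ : a ∉ W₂ := by
        intro ha2
        exact (Finset.mem_filter.mp ha2).2 ⟨s₀, Finset.mem_inter.mpr ⟨hs₀fa, hs₀X⟩⟩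
      have hW₂ss : W₂ ⊂ W :=
        (Finset.ssubset_iff_of_subset (Finset.filter_subset _ _)).mpr ⟨a, haW, haW₂⟩
      have hW₂card : W₂.card ≤ N := by
        have := Finset.card_lt_card hW₂ss
        omega
      have hne₂ : ∀ w ∈ W₂, (f w).Nonempty := fun w hw => hne w (Finset.filter_subset _ _ hw)
      have htrace₂ : ∀ a' ∈ W₂, (f a').card ≤ (W₂.filter (fun w => f w ⊆ f a')).card := by
        intro a' ha'
        obtain ⟨ha'W, ha'X⟩ := Finset.mem_filter.mp ha'
        have hEq : W.filter (fun w => f w ⊆ f a') ⊆ W₂ := by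
          intro w' hw'
          obtain ⟨hw'W, hsub⟩ := Finset.mem_filter.mp hw'
          refine Finset.mem_filter.mpr ⟨hw'W, ?_⟩
          rintro ⟨s, hs⟩
          obtain ⟨hsf, hsX⟩ := Finset.mem_inter.mp hs
          exact ha'X ⟨s, Finset.mem_inter.mpr ⟨hsub hsf, hsX⟩⟩
        have heq2 : W.filter (fun w => f w ⊆ f a') = W₂.filter (fun w => f w ⊆ f a') := by
          apply Finset.Subset.antisymm
          · intro w hw
            exact Finset.mem_filter.mpr ⟨hEq hw, (Finset.mem_filter.mp hw).2⟩
          · exact Finset.filter_subset_filter _ (Finset.filter_subset _ _)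
        calc (f a').card ≤ (W.filter (fun w => f w ⊆ f a')).card := htrace a' ha'W
          _ = (W₂.filter (fun w => f w ⊆ f a')).card := by rw [heq2]
      have hS₂ := ih W₂ f hW₂card hne₂ htrace₂
      have hSsplit : S ⊆ X ∪ W₂.biUnion f := by
        intro s hs
        obtain ⟨w, hwW, hsf⟩ := Finset.mem_biUnion.mp hs
        by_cases hw1 : (f w ∩ X).Nonempty
        · exact Finset.mem_union_left _ (hK1 w (Finset.mem_filter.mpr ⟨hwW, hw1⟩) hsf)
        · exact Finset.mem_union_right _
            (Finset.mem_biUnion.mpr ⟨w, Finset.mem_filter.mpr ⟨hwW, hw1⟩, hsf⟩)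
      have hw₁1 : 1 ≤ W₁.card := Finset.card_pos.mpr ⟨a, haW₁⟩
      have hw₂1 : 1 ≤ W₂.card := Finset.card_pos.mpr hW₂ne
      have hmerge := merge_quarter hw₁1 hw₂1
      calc S.card ≤ (X ∪ W₂.biUnion f).card := Finset.card_le_card hSsplit
        _ ≤ X.card + (W₂.biUnion f).card := Finset.card_union_le _ _
        _ ≤ (W₁.card^2/4 + 1) + (W₂.card^2/4 + 1) := Nat.add_le_add hXbound hS₂
        _ ≤ (W₁.card + W₂.card)^2/4 + 1 := by linarith [hmerge]
        _ = W.card^2/4 + 1 := by rw [hcards]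
section GraphSide

variable {V : Type*} [Fintype V] (G : SimpleGraph V)

/-- Any independent finset extends to a maximal independent finset. -/
lemma exists_max_indep (S₀ : Finset V) (h : ∀ a ∈ S₀, ∀ b ∈ S₀, ¬ G.Adj a b) :
    ∃ S : Finset V, S₀ ⊆ S ∧ (∀ a ∈ S, ∀ b ∈ S, ¬ G.Adj a b) ∧
      ∀ v, v ∉ S → ∃ s ∈ S, G.Adj v s := by
  classical
  have main : ∀ (k : ℕ) (S₁ : Finset V), Fintype.card V - S₁.card ≤ k →
      (∀ a ∈ S₁, ∀ b ∈ S₁, ¬ G.Adj a b) →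
      ∃ S : Finset V, S₁ ⊆ S ∧ (∀ a ∈ S, ∀ b ∈ S, ¬ G.Adj a b) ∧
        ∀ v, v ∉ S → ∃ s ∈ S, G.Adj v s := by
    intro k
    induction k with
    | zero =>
      intro S₁ hk hind
      have hcard : S₁.card = Fintype.card V := by
        have h1 : S₁.card ≤ Fintype.card V := Finset.card_le_univ S₁
        omega
      have huniv : S₁ = Finset.univ := Finset.eq_univ_of_card _ hcard
      refine ⟨S₁, Finset.Subset.refl _, hind, ?_⟩
      intro v hv
      rw [huniv] at hv
      exact absurd (Finset.mem_univ v) hv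
    | succ k ihk =>
      intro S₁ hk hind
      by_cases hex : ∃ v, v ∉ S₁ ∧ ∀ s ∈ S₁, ¬ G.Adj v s
      · obtain ⟨v, hv, hvadj⟩ := hex
        have hcard : (insert v S₁).card = S₁.card + 1 := Finset.card_insert_of_notMem hv
        have hcardle : S₁.card + 1 ≤ Fintype.card V := by
          rw [← hcard]; exact Finset.card_le_univ _
        have hind' : ∀ a ∈ insert v S₁, ∀ b ∈ insert v S₁, ¬ G.Adj a b := by
          intro a ha b hb
          rcases Finset.mem_insert.mp ha with rfl | ha'
          · rcases Finset.mem_insert.mp hb with rfl | hb'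
            · exact G.irrefl
            · exact hvadj b hb'
          · rcases Finset.mem_insert.mp hb with rfl | hb'
            · exact fun hadj => hvadj a ha' (G.adj_symm hadj)
            · exact hind a ha' b hb'
        obtain ⟨S, hsub, hindS, hmaxS⟩ := ihk (insert v S₁) (by omega) hind'
        exact ⟨S, (Finset.subset_insert v S₁).trans hsub, hindS, hmaxS⟩
      · push_neg at hex
        exact ⟨S₁, Finset.Subset.refl _, hind, hex⟩
  exact main (Fintype.card V) S₀ (by omega) h

/-- The complement of a maximal independent set is a minimal vertex cover. -/
lemma maxindep_compl_minVC [DecidableEq V] (S : Finset V)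
    (hind : ∀ a ∈ S, ∀ b ∈ S, ¬ G.Adj a b)
    (hmax : ∀ v, v ∉ S → ∃ s ∈ S, G.Adj v s) :
    IsMinVC G Sᶜ := by
  constructor
  · intro u v huv
    by_cases hu : u ∈ Sᶜ
    · exact Or.inl hu
    · have huS : u ∈ S := by
        by_contra h'
        exact hu (Finset.mem_compl.mpr h')
      right
      rw [Finset.mem_compl]
      intro hvS
      exact hind u huS v hvS huv
  · intro W' hW' hVC'
    obtain ⟨w, hwSc, hwW'⟩ := Finset.exists_of_ssubset hW'
    have hwS : w ∉ S := Finset.mem_compl.mp hwSc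
    obtain ⟨s, hsS, hadj⟩ := hmax w hwS
    rcases hVC' hadj with h | h
    · exact hwW' h
    · exact (Finset.mem_compl.mp (hW'.1 h)) hsS

lemma minVC_card_le_tau (W : Finset V) (h : IsMinVC G W) : W.card ≤ tauMax G := by
  apply le_csSup
  · refine ⟨Fintype.card V, ?_⟩
    rintro k ⟨W', _, rfl⟩
    exact Finset.card_le_univ _
  · exact ⟨W, h, rfl⟩

/-- Lemma A: the "neighbourhood" of an independent set has size at most `tauMax`. -/
lemma neighborhood_card_le_tau (S₀ : Finset V)
    (hind : ∀ a ∈ S₀, ∀ b ∈ S₀, ¬ G.Adj a b)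
    (NS : Finset V) (hNS : ∀ x ∈ NS, ∃ s ∈ S₀, G.Adj s x) :
    NS.card ≤ tauMax G := by
  classical
  obtain ⟨S, hsub, hindS, hmaxS⟩ := exists_max_indep G S₀ hind
  have hNSsub : NS ⊆ Sᶜ := by
    intro x hx
    obtain ⟨s, hsS₀, hadj⟩ := hNS x hx
    rw [Finset.mem_compl]
    intro hxS
    exact hindS s (hsub hsS₀) x hxS hadj
  calc NS.card ≤ (Sᶜ).card := Finset.card_le_card hNSsub
    _ ≤ tauMax G := minVC_card_le_tau G _ (maxindep_compl_minVC G S hindS hmaxS)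

lemma tau_attained : ∃ W : Finset V, IsMinVC G W ∧ W.card = tauMax G := by
  classical
  have hne : {k : ℕ | ∃ W : Finset V, IsMinVC G W ∧ W.card = k}.Nonempty := by
    obtain ⟨S, _, hindS, hmaxS⟩ := exists_max_indep G ∅ (by simp)
    exact ⟨(Sᶜ).card, Sᶜ, maxindep_compl_minVC G S hindS hmaxS, rfl⟩
  have hbdd : BddAbove {k : ℕ | ∃ W : Finset V, IsMinVC G W ∧ W.card = k} := by
    refine ⟨Fintype.card V, ?_⟩
    rintro k ⟨W', _, rfl⟩
    exact Finset.card_le_univ _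
  have hmem := Nat.sSup_mem hne hbdd
  obtain ⟨W, hW, hcard⟩ := hmem
  exact ⟨W, hW, hcard⟩

end GraphSide
theorem stmt_2 {V : Type*} [Fintype V] (G : SimpleGraph V)
    (hiso : ∀ v : V, ∃ u : V, G.Adj v u) (hgap : GapFree G) :
    2 * Real.sqrt (Fintype.card V) - 2 ≤ (tauMax G : ℝ) := by
  classical
  obtain ⟨Wm, ⟨hVC, hmin⟩, hWcard⟩ := tau_attained G
  set τ := tauMax G with hτ
  set Sm : Finset V := Wmᶜ with hSm
  have hindS : ∀ a ∈ Sm, ∀ b ∈ Sm, ¬ G.Adj a b := by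
    intro a ha b hb hadj
    rcases hVC hadj with h | h
    · exact (Finset.mem_compl.mp ha) h
    · exact (Finset.mem_compl.mp hb) h
  have hWS : ∀ w ∈ Wm, ∃ s ∈ Sm, G.Adj w s := by
    intro w hw
    have hss : Wm.erase w ⊂ Wm := Finset.erase_ssubset hw
    have hnVC := hmin _ hss
    rw [IsVC] at hnVC
    push_neg at hnVC
    obtain ⟨u, v, hadj, hu, hv⟩ := hnVC
    rcases hVC hadj with h | h
    · have hu_eq : u = w := by
        by_contra hne'
        exact hu (Finset.mem_erase.mpr ⟨hne', h⟩)
      subst hu_eq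
      have hvw : v ≠ u := fun hh => by rw [hh] at hadj; exact G.irrefl hadj
      have hvW : v ∉ Wm := fun hvWm => hv (Finset.mem_erase.mpr ⟨hvw, hvWm⟩)
      exact ⟨v, Finset.mem_compl.mpr hvW, hadj⟩
    · have hv_eq : v = w := by
        by_contra hne'
        exact hv (Finset.mem_erase.mpr ⟨hne', h⟩)
      subst hv_eq
      have huv : u ≠ v := fun hh => by rw [hh] at hadj; exact G.irrefl hadj
      have huW : u ∉ Wm := fun huWm => hu (Finset.mem_erase.mpr ⟨huv, huWm⟩)
      exact ⟨u, Finset.mem_compl.mpr huW, G.adj_symm hadj⟩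
  set f : V → Finset V := fun w => Sm.filter (fun s => G.Adj w s) with hf
  have hfne : ∀ w ∈ Wm, (f w).Nonempty := by
    intro w hw
    obtain ⟨s, hsSm, hadj⟩ := hWS w hw
    exact ⟨s, Finset.mem_filter.mpr ⟨hsSm, hadj⟩⟩
  have hScov : Sm ⊆ Wm.biUnion f := by
    intro s hs
    obtain ⟨u, hadj⟩ := hiso s
    have huW : u ∈ Wm := by
      by_contra huW
      exact hindS s hs u (Finset.mem_compl.mpr huW) hadj
    exact Finset.mem_biUnion.mpr ⟨u, huW, Finset.mem_filter.mpr ⟨hs, G.adj_symm hadj⟩⟩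
  have hkey : ∀ a ∈ Wm, (f a).card ≤ (Wm.filter (fun w => f w ⊆ f a)).card := by
    intro a haW
    set S₀ : Finset V := insert a (Sm.filter (fun s => ¬ G.Adj a s)) with hS₀
    have hS₀ind : ∀ x ∈ S₀, ∀ y ∈ S₀, ¬ G.Adj x y := by
      intro x hx y hy hadj
      rcases Finset.mem_insert.mp hx with rfl | hx'
      · rcases Finset.mem_insert.mp hy with hyx | hy'
        · rw [hyx] at hadj; exact G.irrefl hadj
        · exact (Finset.mem_filter.mp hy').2 hadj
      · rcases Finset.mem_insert.mp hy with hyx | hy'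
        · rw [hyx] at hadj; exact (Finset.mem_filter.mp hx').2 (G.adj_symm hadj)
        · exact hindS x (Finset.mem_filter.mp hx').1 y (Finset.mem_filter.mp hy').1 hadj
    set D : Finset V := Wm.filter (fun w => f w ⊆ f a) with hD
    set NS : Finset V := f a ∪ (Wm \ D) with hNS
    have hNSadj : ∀ x ∈ NS, ∃ s ∈ S₀, G.Adj s x := by
      intro x hx
      rcases Finset.mem_union.mp hx with hxf | hxWD
      · exact ⟨a, Finset.mem_insert_self _ _, (Finset.mem_filter.mp hxf).2⟩
      · obtain ⟨hxW, hxD⟩ := Finset.mem_sdiff.mp hxWD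
        have hnsub : ¬ (f x ⊆ f a) := fun hsub => hxD (Finset.mem_filter.mpr ⟨hxW, hsub⟩)
        obtain ⟨s, hsfx, hsfa⟩ := Finset.not_subset.mp hnsub
        have hsSm : s ∈ Sm := (Finset.mem_filter.mp hsfx).1
        have hadjxs : G.Adj x s := (Finset.mem_filter.mp hsfx).2
        have hnadj : ¬ G.Adj a s := fun hadj => hsfa (Finset.mem_filter.mpr ⟨hsSm, hadj⟩)
        exact ⟨s, Finset.mem_insert_of_mem (Finset.mem_filter.mpr ⟨hsSm, hnadj⟩),
          G.adj_symm hadjxs⟩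
    have hNSbound := neighborhood_card_le_tau G S₀ hS₀ind NS hNSadj
    have hdisj : Disjoint (f a) (Wm \ D) := by
      rw [Finset.disjoint_left]
      intro x hxf hxWD
      have hxSm : x ∈ Sm := (Finset.mem_filter.mp hxf).1
      exact (Finset.mem_compl.mp hxSm) (Finset.mem_sdiff.mp hxWD).1
    have hcardNS : NS.card = (f a).card + (Wm \ D).card :=
      Finset.card_union_of_disjoint hdisj
    have hDsub : D ⊆ Wm := Finset.filter_subset _ _
    have hsd : (Wm \ D).card = Wm.card - D.card := Finset.card_sdiff_of_subset hDsub
    have hDle : D.card ≤ Wm.card := Finset.card_le_card hDsub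
    omega
  have hmaster := master_bound Wm.card Wm f le_rfl hfne hkey
  have hScard : Sm.card ≤ τ^2/4 + 1 := by
    calc Sm.card ≤ (Wm.biUnion f).card := Finset.card_le_card hScov
      _ ≤ Wm.card^2/4 + 1 := hmaster
      _ = τ^2/4 + 1 := by rw [hWcard]
  have hn : Fintype.card V ≤ τ^2/4 + τ + 1 := by
    have hcc := Finset.card_add_card_compl Wm
    rw [← hSm] at hcc
    omega
  have hcast : (Fintype.card V : ℝ) ≤ ((τ:ℝ)/2 + 1)^2 := by
    have h1 : ((τ^2/4 : ℕ) : ℝ) ≤ ((τ:ℝ)^2)/4 := by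
      calc ((τ^2/4 : ℕ) : ℝ) ≤ ((τ^2 : ℕ) : ℝ)/((4:ℕ):ℝ) := Nat.cast_div_le
        _ = (τ:ℝ)^2/4 := by push_cast; ring
    have h2 : (Fintype.card V : ℝ) ≤ ((τ^2/4 : ℕ) : ℝ) + (τ:ℝ) + 1 := by
      exact_mod_cast hn
    nlinarith [h1, h2]
  have hsqrt : Real.sqrt (Fintype.card V) ≤ (τ:ℝ)/2 + 1 := by
    have h0 : (0:ℝ) ≤ (τ:ℝ)/2 + 1 := by positivity
    calc Real.sqrt (Fintype.card V) ≤ Real.sqrt (((τ:ℝ)/2 + 1)^2) :=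
          Real.sqrt_le_sqrt hcast
      _ = (τ:ℝ)/2 + 1 := Real.sqrt_sq h0
  linarith
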